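/- arXiv:2507.03439 — 2 statements merged into one kernel-verified Lean document; each statement's English description precedes it below -/
import Mathlib

section
/- Let Σ be a finite alphabet, c ∈ Σ, L₁ ⊆ (Σ ∖ {c})* (i.e., no word of L₁ contains c), and L₂ ⊆ Σ*. Then Σ* ∖ (L₁ · {c} · L₂) = ((Σ ∖ {c})* ∖ L₁) · {c} · Σ* ∪ (Σ ∖ {c})* ∪ (Σ ∖ {c})* · {c} · (Σ* ∖ L₂). -/
/-- The language of words over `α` containing no occurrence of `c`,
i.e. `(Σ ∖ {c})*`. -/
def noLetter {α : Type*} (c : α) : Language α := {w | c ∉ w}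

private lemma first_occ {α : Type*} {c : α} {w : List α} (h : c ∈ w) :
    ∃ u v, w = u ++ c :: v ∧ c ∉ u := by
  induction w with
  | nil => simp at h
  | cons a t ih =>
    by_cases hac : a = c
    · exact ⟨[], t, by simp [hac], by simp⟩
    · have hct : c ∈ t := by
        rcases List.mem_cons.1 h with h | h
        · exact absurd h.symm hac
        · exact h
      obtain ⟨u, v, heq, hu⟩ := ih hct
      refine ⟨a :: u, v, by simp [heq], ?_⟩
      intro hc
      rcases List.mem_cons.1 hc with h | h
      · exact hac h.symm
      · exact hu h

private lemma split_unique {α : Type*} {c : α} :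
    ∀ (u₁ u₂ v₁ v₂ : List α), c ∉ u₁ → c ∉ u₂ →
      u₁ ++ c :: v₁ = u₂ ++ c :: v₂ → u₁ = u₂ ∧ v₁ = v₂
  | [], [], v₁, v₂, _, _, h => by simpa using h
  | [], a :: t, v₁, v₂, _, h₂, h => by
      simp at h
      exact absurd (h.1 ▸ List.mem_cons_self (a := a) (l := t)) h₂
  | a :: t, [], v₁, v₂, h₁, _, h => by
      simp at h
      exact absurd (h.1.symm ▸ List.mem_cons_self (a := a) (l := t)) h₁
  | a :: t, b :: s, v₁, v₂, h₁, h₂, h => by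
      simp only [List.cons_append, List.cons.injEq] at h
      obtain ⟨rfl, h'⟩ := h
      have ht : c ∉ t := fun hc => h₁ (List.mem_cons_of_mem _ hc)
      have hs : c ∉ s := fun hc => h₂ (List.mem_cons_of_mem _ hc)
      obtain ⟨rfl, rfl⟩ := split_unique t s v₁ v₂ ht hs h'
      exact ⟨rfl, rfl⟩

/-- Three-case characterization of the complement of `L₁ · {c} · L₂` when no
word of `L₁` contains `c` (Section 4.2 of the paper). -/
theorem gate_three_case_characterization {α : Type*} [Fintype α] (c : α)
    (L₁ L₂ : Language α) (hL₁ : L₁ ≤ noLetter c) :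
    (L₁ * {[c]} * L₂)ᶜ =
      (noLetter c \ L₁) * {[c]} * ⊤ ⊔ noLetter c ⊔ noLetter c * {[c]} * L₂ᶜ := by
  ext w
  constructor
  · intro hw
    by_cases hc : c ∈ w
    · obtain ⟨u, v, rfl, hu⟩ := first_occ hc
      by_cases hu1 : u ∈ L₁
      · -- third case : v ∉ L₂
        have hv : v ∉ L₂ := by
          intro hv
          exact hw ⟨u ++ [c], ⟨u, hu1, [c], rfl, rfl⟩, v, hv, by simp⟩
        refine Or.inr ⟨u ++ [c], ⟨u, hu, [c], rfl, rfl⟩, v, hv, by simp⟩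
      · exact Or.inl (Or.inl ⟨u ++ [c], ⟨u, ⟨hu, hu1⟩, [c], rfl, rfl⟩, v, trivial, by simp⟩)
    · exact Or.inl (Or.inr hc)
  · rintro hw ⟨_, ⟨a, ha, _, rfl, rfl⟩, b, hb, hab⟩
    have hac : c ∉ a := hL₁ ha
    rcases hw with (⟨_, ⟨u, ⟨hu, hu1⟩, _, rfl, rfl⟩, v, _, huv⟩ | hnw) | ⟨_, ⟨u, hu, _, rfl, rfl⟩, v, hv, huv⟩
    · rw [← hab] at huv
      simp only [List.append_assoc, List.singleton_append] at huv
      obtain ⟨rfl, rfl⟩ := split_unique u a v b hu hac huv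
      exact hu1 ha
    · rw [← hab] at hnw
      exact hnw (by simp)
    · rw [← hab] at huv
      simp only [List.append_assoc, List.singleton_append] at huv
      obtain ⟨rfl, rfl⟩ := split_unique u a v b hu hac huv
      exact hv hb
end

section
/- Fix n ∈ ℕ and let Lₙ = {a, b}* · {a} · {a, b}ⁿ over the two-letter alphabet {a, b}. Then every DFA whose language is {a, b}* ∖ Lₙ has at least 2^{n+1} states, and there exists a DFA with exactly 2^{n+1} states whose language is {a, b}* ∖ Lₙ. -/
def lenLang (α : Type*) (n : ℕ) : Language α := {w | w.length = n}

def IsPartialDFA {α σ : Type*} (M : NFA α σ) : Prop :=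
  (∃ q, M.start = {q}) ∧ ∀ q a, (M.step q a).Subsingleton

section Aux

variable {α σ τ : Type*}

lemma mem_L_iff (n : ℕ) (w : List Bool) :
    w ∈ ((⊤ : Language Bool) * {[true]} * lenLang Bool n) ↔
      w.reverse.getD n false = true := by
  constructor
  · rintro ⟨ab, ⟨x, -, t, ht, rfl⟩, y, hy, rfl⟩
    obtain rfl : t = [true] := ht
    have hlen : (y.reverse).length = n := by simpa [lenLang] using hy
    rw [List.reverse_append, List.reverse_append]
    rw [List.getD_append_right _ _ _ _ (by omega)]
    simp [hlen]
  · intro h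
    set r := w.reverse with hr
    have hn : n < r.length := by
      by_contra hn
      rw [List.getD_eq_default _ _ (by omega)] at h
      simp at h
    have hsplit : r = r.take n ++ r[n] :: r.drop (n + 1) := by
      conv_lhs => rw [← List.take_append_drop n r]
      rw [List.drop_eq_getElem_cons hn]
    have hget : r[n] = true := by
      rw [List.getD_eq_getElem _ _ hn] at h; exact h
    have hw : w = ((r.drop (n + 1)).reverse ++ [true]) ++ (r.take n).reverse := by
      have := congrArg List.reverse hsplit
      rw [List.reverse_reverse] at this
      rw [this, hget]
      simp
    refine ⟨(r.drop (n + 1)).reverse ++ [true],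
      ⟨(r.drop (n + 1)).reverse, trivial, [true], rfl, rfl⟩,
      (r.take n).reverse, ?_, hw.symm⟩
    simp [lenLang]
    omega

lemma lang_mem_compl_iff {β : Type*} (L : Language β) (w : List β) : w ∈ Lᶜ ↔ w ∉ L :=
  Iff.rfl

lemma stepSet_subsingleton (M : NFA α σ) (h : ∀ q a, (M.step q a).Subsingleton)
    {S : Set σ} (hS : S.Subsingleton) (a : α) : (M.stepSet S a).Subsingleton := by
  intro x hx y hy
  rw [NFA.mem_stepSet] at hx hy
  obtain ⟨s, hs, hx⟩ := hx
  obtain ⟨t, ht, hy⟩ := hy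
  cases hS hs ht
  exact h s a hx hy

lemma evalFrom_subsingleton (M : NFA α σ) (h : ∀ q a, (M.step q a).Subsingleton)
    {S : Set σ} (hS : S.Subsingleton) (w : List α) : (M.evalFrom S w).Subsingleton := by
  induction w generalizing S with
  | nil => exact hS
  | cons a w ih => exact ih (stepSet_subsingleton M h hS a)

lemma evalFrom_empty (M : NFA α σ) (w : List α) : M.evalFrom ∅ w = ∅ := by
  induction w with
  | nil => rfl
  | cons a w ih => show M.evalFrom (M.stepSet ∅ a) w = ∅; rwa [NFA.stepSet_empty]

lemma evalFrom_append (M : NFA α σ) (S : Set σ) (x y : List α) :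
    M.evalFrom S (x ++ y) = M.evalFrom (M.evalFrom S x) y := by
  simp [NFA.evalFrom, List.foldl_append]

/-- Relabeling of an NFA along an equivalence. -/
def NFA.relabel (M : NFA α σ) (e : τ ≃ σ) : NFA α τ where
  step t a := e ⁻¹' M.step (e t) a
  start := e ⁻¹' M.start
  accept := e ⁻¹' M.accept

lemma relabel_evalFrom (M : NFA α σ) (e : τ ≃ σ) (S : Set σ) (w : List α) :
    (M.relabel e).evalFrom (e ⁻¹' S) w = e ⁻¹' M.evalFrom S w := by
  induction w generalizing S with
  | nil => rfl
  | cons a w ih =>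
    show (M.relabel e).evalFrom ((M.relabel e).stepSet (e ⁻¹' S) a) w = _
    have hstep : (M.relabel e).stepSet (e ⁻¹' S) a = e ⁻¹' M.stepSet S a := by
      ext t
      simp only [NFA.mem_stepSet, Set.mem_preimage, NFA.relabel]
      constructor
      · rintro ⟨s, hs, h⟩; exact ⟨e s, hs, h⟩
      · rintro ⟨s, hs, h⟩; exact ⟨e.symm s, by simpa using hs, by simpa using h⟩
    rw [hstep, ih]
    rfl

lemma relabel_accepts (M : NFA α σ) (e : τ ≃ σ) : (M.relabel e).accepts = M.accepts := by
  ext w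
  rw [NFA.mem_accepts, NFA.mem_accepts]
  have := relabel_evalFrom M e M.start w
  constructor
  · rintro ⟨t, ht, hev⟩
    rw [show (M.relabel e).start = e ⁻¹' M.start from rfl, this] at hev
    exact ⟨e t, ht, hev⟩
  · rintro ⟨s, hs, hev⟩
    refine ⟨e.symm s, by simpa [NFA.relabel] using hs, ?_⟩
    rw [show (M.relabel e).start = e ⁻¹' M.start from rfl, this]
    simpa using hev

/-- The state reached by the canonical DFA after reading `w`: the window of the
last `n+1` letters (most recent first), padded with `false`. -/
def stateOf (n : ℕ) (w : List Bool) : Fin (n + 1) → Bool :=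
  fun i => w.reverse.getD i false

/-- The canonical DFA for the complement language, on `2^(n+1)` states. -/
def Mstd (n : ℕ) : NFA Bool (Fin (n + 1) → Bool) where
  step q a := {fun i : Fin (n + 1) =>
    if (i : ℕ) = 0 then a else q ⟨(i : ℕ) - 1, by have := i.isLt; omega⟩}
  start := {fun _ => false}
  accept := {q | q (Fin.last n) = false}

lemma eval_Mstd (n : ℕ) (w : List Bool) : (Mstd n).eval w = {stateOf n w} := by
  induction w using List.reverseRecOn with
  | nil =>
    show (Mstd n).start = _
    have : stateOf n [] = fun _ => false := by funext i; simp [stateOf]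
    rw [this]; rfl
  | append_singleton w a ih =>
    rw [NFA.eval, evalFrom_append, ← NFA.eval, ih]
    show (Mstd n).stepSet {stateOf n w} a = _
    have h1 : (Mstd n).stepSet {stateOf n w} a = (Mstd n).step (stateOf n w) a := by
      simp [NFA.stepSet]
    rw [h1]
    have hst : stateOf n (w ++ [a]) = fun i : Fin (n + 1) =>
        if (i : ℕ) = 0 then a else stateOf n w ⟨(i : ℕ) - 1, by have := i.isLt; omega⟩ := by
      funext i
      have hrev : (w ++ [a]).reverse = a :: w.reverse := by simp
      by_cases h0 : (i : ℕ) = 0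
      · simp [stateOf, hrev, h0]
      · obtain ⟨k, hk⟩ : ∃ k, (i : ℕ) = k + 1 := ⟨(i : ℕ) - 1, by omega⟩
        simp only [stateOf, hrev, h0, if_neg, hk]
        rfl
    rw [hst]
    rfl

lemma accepts_Mstd (n : ℕ) :
    (Mstd n).accepts = ((⊤ : Language Bool) * {[true]} * lenLang Bool n)ᶜ := by
  ext w
  rw [NFA.mem_accepts]
  have hev : (Mstd n).evalFrom (Mstd n).start w = {stateOf n w} := eval_Mstd n w
  rw [hev]
  simp only [Set.mem_singleton_iff, exists_eq_right]
  show stateOf n w (Fin.last n) = false ↔ _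
  rw [lang_mem_compl_iff, mem_L_iff]
  simp [stateOf, Fin.val_last]

end Aux

/-- Sections 1 and 3 of the paper: every DFA for the complement of
`Lₙ = {a, b}* · {a} · {a, b}ⁿ` has at least `2^(n+1)` states, and there is one
with exactly `2^(n+1)` states.  The alphabet `{a, b}` is modeled by `Bool`
with `a = true`. -/
theorem minimal_dfa_complement_lastNthLetterA (n : ℕ) :
    (∀ (σ : Type) [Fintype σ] (M : NFA Bool σ), IsPartialDFA M →
        M.accepts = (⊤ * {[true]} * lenLang Bool n)ᶜ →
        2 ^ (n + 1) ≤ Fintype.card σ) ∧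
      ∃ M : NFA Bool (Fin (2 ^ (n + 1))), IsPartialDFA M ∧
        M.accepts = (⊤ * {[true]} * lenLang Bool n)ᶜ := by
  constructor
  · rintro σ _ M ⟨⟨q0, hstart⟩, hstep⟩ hacc
    -- the word associated to a window
    set wu : (Fin (n + 1) → Bool) → List Bool := fun u => (List.ofFn u).reverse with hwu
    -- membership criterion for wu u ++ replicate i false, i ≤ n
    have hmem : ∀ (u : Fin (n + 1) → Bool) (i : ℕ) (hi : i ≤ n),
        (wu u ++ List.replicate i false ∈
            ((⊤ : Language Bool) * {[true]} * lenLang Bool n)) ↔ u ⟨n - i, by omega⟩ = true := by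
      intro u i hi
      rw [mem_L_iff]
      rw [List.reverse_append, List.reverse_reverse, List.reverse_replicate]
      rw [List.getD_append_right _ _ _ _ (by simp; omega)]
      rw [List.length_replicate]
      rw [List.getD_eq_getElem _ _ (by simp)]
      rw [List.getElem_ofFn]
    -- eval of wu u is nonempty
    have hne : ∀ u : Fin (n + 1) → Bool, (M.eval (wu u)).Nonempty := by
      intro u
      have hw : wu u ++ List.replicate (n + 1) false ∈ M.accepts := by
        rw [hacc, lang_mem_compl_iff, mem_L_iff]
        rw [List.reverse_append, List.reverse_reverse, List.reverse_replicate]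
        rw [List.getD_append _ _ _ _ (by simp)]
        simp
      rw [NFA.mem_accepts] at hw
      obtain ⟨s, -, hs⟩ := hw
      rw [evalFrom_append] at hs
      rcases Set.eq_empty_or_nonempty (M.eval (wu u)) with h | h
      · rw [show M.eval (wu u) = M.evalFrom M.start (wu u) from rfl] at h
        rw [h, evalFrom_empty] at hs
        exact absurd hs (Set.notMem_empty s)
      · exact h
    have hsub : ∀ w : List Bool, (M.eval w).Subsingleton := fun w =>
      evalFrom_subsingleton M hstep (by rw [hstart]; exact Set.subsingleton_singleton) w
    -- the state function
    have key : ∀ u : Fin (n + 1) → Bool, M.eval (wu u) = {(hne u).some} := fun u =>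
      ((hsub (wu u)).eq_singleton_of_mem (hne u).some_mem)
    have hinj : Function.Injective (fun u => (hne u).some) := by
      intro u v huv
      by_contra h
      obtain ⟨i, hi⟩ := Function.ne_iff.mp h
      have heval : M.eval (wu u) = M.eval (wu v) := by rw [key u, key v]; simpa using huv
      have hsame : ∀ z, (wu u ++ z ∈ M.accepts ↔ wu v ++ z ∈ M.accepts) := by
        intro z
        have heval' : M.evalFrom M.start (wu u) = M.evalFrom M.start (wu v) := heval
        rw [NFA.mem_accepts, NFA.mem_accepts, evalFrom_append, evalFrom_append, heval']
      have h2 := hsame (List.replicate (n - i) false)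
      rw [hacc, lang_mem_compl_iff, lang_mem_compl_iff, not_iff_not] at h2
      rw [hmem u (n - i) (by omega), hmem v (n - i) (by omega)] at h2
      have hle : (i : ℕ) ≤ n := by omega
      have hii : (⟨n - (n - i), by omega⟩ : Fin (n + 1)) = i :=
        Fin.ext (show n - (n - (i : ℕ)) = (i : ℕ) by omega)
      rw [hii] at h2
      exact hi (Bool.eq_iff_iff.mpr h2)
    calc 2 ^ (n + 1) = Fintype.card (Fin (n + 1) → Bool) := by simp
      _ ≤ Fintype.card σ := Fintype.card_le_of_injective _ hinj
  · have hcard : Fintype.card (Fin (n + 1) → Bool) = 2 ^ (n + 1) := by simp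
    let e : Fin (2 ^ (n + 1)) ≃ (Fin (n + 1) → Bool) :=
      (Fintype.equivFinOfCardEq hcard).symm
    refine ⟨(Mstd n).relabel e, ⟨⟨e.symm (fun _ => false), ?_⟩, ?_⟩, ?_⟩
    · show e ⁻¹' {fun _ => false} = _
      ext t
      simp [Equiv.eq_symm_apply, eq_comm]
    · intro q a
      intro x hx y hy
      simp only [NFA.relabel, Set.mem_preimage, Mstd, Set.mem_singleton_iff] at hx hy
      exact e.injective (hx.trans hy.symm)
    · rw [relabel_accepts, accepts_Mstd]
end
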